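/- For every compact linear order L and every ordinal α, the lexicographic power L^α (functions from α to L ordered lexicographically) is a compact linear order; moreover if L is a linearly ordered continuum (compact and dense), then so is L^α. -/

import Mathlib

/-- A compact line: every subset has a supremum and an infimum. -/
def CompactLine (K : Type*) [LinearOrder K] : Prop :=
  ∀ S : Set K, (∃ a, IsLUB S a) ∧ (∃ a, IsGLB S a)

section Aux

variable {ι L : Type*} [LinearOrder ι] [WellFoundedLT ι] [LinearOrder L]

/-- Transfinite-recursive construction of the lexicographic supremum:
`lexSupFun sup S i` is `sup` of the values `g i` over all `g ∈ S` that agree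
with the construction below `i`. -/
noncomputable def lexSupFun (sup : Set L → L) (S : Set (ι → L)) : ι → L :=
  (IsWellFounded.wf : WellFounded ((· < ·) : ι → ι → Prop)).fix
    (fun i rec => sup {x | ∃ g ∈ S, (∀ j, ∀ h : j < i, g j = rec j h) ∧ g i = x})

omit [LinearOrder L] in
theorem lexSupFun_eq (sup : Set L → L) (S : Set (ι → L)) (i : ι) :
    lexSupFun sup S i =
      sup {x | ∃ g ∈ S, (∀ j, j < i → g j = lexSupFun sup S j) ∧ g i = x} := by
  exact WellFounded.fix_eq _ _ i

theorem isLUB_lexSupFun (sup : Set L → L) (hsup : ∀ T, IsLUB T (sup T))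
    (S : Set (Lex (ι → L))) : IsLUB S (toLex (lexSupFun sup (ofLex '' S))) := by
  set f : ι → L := lexSupFun sup (ofLex '' S) with hf
  constructor
  · -- upper bound
    intro g hg
    rcases eq_or_ne (ofLex g) f with h | h
    · exact le_of_eq (by rw [← h]; rfl)
    · right
      obtain ⟨i, hi, hne⟩ := IsWellFounded.wf.has_min (r := (· < ·))
        {i | ofLex g i ≠ f i} (Function.ne_iff.1 h)
      have hagree : ∀ j, j < i → ofLex g j = f j := by
        intro j hj
        by_contra hc
        exact hne j hc hj
      refine ⟨i, hagree, ?_⟩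
      have hmem : ofLex g i ∈ {x | ∃ g' ∈ ofLex '' S, (∀ j, j < i → g' j = f j) ∧ g' i = x} :=
        ⟨ofLex g, ⟨g, hg, rfl⟩, hagree, rfl⟩
      have := (hsup _).1 hmem
      rw [← lexSupFun_eq sup (ofLex '' S) i] at this
      exact lt_of_le_of_ne this hi
  · -- least
    intro b hb
    rcases eq_or_ne f (ofLex b) with h | h
    · exact le_of_eq (by show toLex f = b; rw [h]; rfl)
    · right
      obtain ⟨i, hi, hne⟩ := IsWellFounded.wf.has_min (r := (· < ·))
        {i | f i ≠ ofLex b i} (Function.ne_iff.1 h)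
      have hagree : ∀ j, j < i → f j = ofLex b j := by
        intro j hj
        by_contra hc
        exact hne j hc hj
      refine ⟨i, hagree, ?_⟩
      have hub : ofLex b i ∈ upperBounds {x | ∃ g' ∈ ofLex '' S,
          (∀ j, j < i → g' j = f j) ∧ g' i = x} := by
        rintro x ⟨g', ⟨g, hgS, rfl⟩, hg', rfl⟩
        have hgb : g ≤ b := hb hgS
        rcases hgb with heq | hlt
        · exact le_of_eq (congrFun (congrArg ofLex heq) i)
        · obtain ⟨k, hk, hklt⟩ := hlt
          rcases lt_trichotomy k i with hki | hki | hki
          · exact absurd ((hg' k hki).trans (hagree k hki)) hklt.ne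
          · subst hki; exact hklt.le
          · exact le_of_eq (hk i hki)
      have : f i ≤ ofLex b i := by
        rw [hf, lexSupFun_eq sup (ofLex '' S) i]
        exact (hsup _).2 hub
      exact lt_of_le_of_ne this hi

theorem isGLB_of_lub_lowerBounds {K : Type*} [Preorder K] {S : Set K} {a : K}
    (h : IsLUB (lowerBounds S) a) : IsGLB S a :=
  ⟨fun _ hs => h.2 fun _ hb => hb hs, fun _ hb => h.1 hb⟩

end Aux

theorem stmt5 (L : Type) [LinearOrder L] (hL : CompactLine L) (α : Ordinal) :
    CompactLine (Lex (α.ToType → L)) ∧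
    (DenselyOrdered L → DenselyOrdered (Lex (α.ToType → L))) := by
  classical
  set ι := α.ToType
  let sup : Set L → L := fun T => (hL T).1.choose
  have hsup : ∀ T, IsLUB T (sup T) := fun T => (hL T).1.choose_spec
  constructor
  · intro S
    constructor
    · exact ⟨_, isLUB_lexSupFun sup hsup S⟩
    · exact ⟨_, isGLB_of_lub_lowerBounds (isLUB_lexSupFun sup hsup (lowerBounds S))⟩
  · intro hd
    constructor
    intro f g hfg
    obtain ⟨i, hi, hlt⟩ := hfg
    obtain ⟨x, hx1, hx2⟩ := exists_between hlt
    refine ⟨toLex (Function.update (ofLex f) i x), ⟨i, ?_, ?_⟩, ⟨i, ?_, ?_⟩⟩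
    · intro j hj
      simp [Function.update_of_ne hj.ne]
    · simpa using hx1
    · intro j hj
      simp [Function.update_of_ne hj.ne, hi j hj]
    · simpa using hx2
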